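/- If n ≥ 0 satisfies PD_n = PD_{n+1}, then PD = PD_n. -/

import Mathlib

noncomputable section
open Matrix
open scoped ComplexOrder

variable {d m r : ℕ}

/-- One step of process `i`: `T_i(ρ) = E_i(M₁ ρ M₁†) = ∑_j (E_{i,j} M₁) ρ (E_{i,j} M₁)†`. -/
def Tstep (E : Fin m → Fin r → Matrix (Fin d) (Fin d) ℂ)
    (M1 : Matrix (Fin d) (Fin d) ℂ) (i : Fin m)
    (ρ : Matrix (Fin d) (Fin d) ℂ) : Matrix (Fin d) (Fin d) ℂ :=
  ∑ j, (E i j * M1) * ρ * (E i j * M1)ᴴ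

/-- `T_f` for a word `f = s₁⋯s_n`: apply `T_{s₁}` first, then `T_{s₂}`, …, `T_{s_n}`. -/
def Tword (E : Fin m → Fin r → Matrix (Fin d) (Fin d) ℂ)
    (M1 : Matrix (Fin d) (Fin d) ℂ) (f : List (Fin m))
    (ρ : Matrix (Fin d) (Fin d) ℂ) : Matrix (Fin d) (Fin d) ℂ :=
  f.foldl (fun σ k => Tstep E M1 k σ) ρ

/-- The support of a matrix: its column space, as a subspace of `ℂ^d`. -/
def supp (A : Matrix (Fin d) (Fin d) ℂ) : Submodule ℂ (Fin d → ℂ) :=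
  LinearMap.range (Matrix.toLin' A)

/-- Length-`n` prefix of a schedule. -/
def prefixn (s : ℕ → Fin m) (n : ℕ) : List (Fin m) :=
  List.ofFn (fun i : Fin n => s i)

/-- Termination probability within a word `f`. -/
def tWord (E : Fin m → Fin r → Matrix (Fin d) (Fin d) ℂ)
    (M0 M1 : Matrix (Fin d) (Fin d) ℂ) (f : List (Fin m))
    (ρ : Matrix (Fin d) (Fin d) ℂ) : ℝ :=
  ∑ n ∈ Finset.range (f.length + 1),
    (M0 * Tword E M1 (f.take n) ρ * M0ᴴ).trace.re

/-- Termination probability along a schedule `s`. -/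
def tSched (E : Fin m → Fin r → Matrix (Fin d) (Fin d) ℂ)
    (M0 M1 : Matrix (Fin d) (Fin d) ℂ) (s : ℕ → Fin m)
    (ρ : Matrix (Fin d) (Fin d) ℂ) : ℝ :=
  ∑' n : ℕ, (M0 * Tword E M1 (prefixn s n) ρ * M0ᴴ).trace.re

/-- Termination probability `t(ρ)`: infimum over all schedules. -/
def tInf (E : Fin m → Fin r → Matrix (Fin d) (Fin d) ℂ)
    (M0 M1 : Matrix (Fin d) (Fin d) ℂ)
    (ρ : Matrix (Fin d) (Fin d) ℂ) : ℝ :=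
  ⨅ s : ℕ → Fin m, tSched E M0 M1 s ρ

/-- The reachable space `H_{R(ρ)}`. -/
def HR (E : Fin m → Fin r → Matrix (Fin d) (Fin d) ℂ)
    (M1 : Matrix (Fin d) (Fin d) ℂ)
    (ρ : Matrix (Fin d) (Fin d) ℂ) : Submodule ℂ (Fin d → ℂ) :=
  ⨆ f : List (Fin m), supp (Tword E M1 f ρ)

/-- The average super-operator `T = (1/m) ∑ T_i`. -/
def Tavg (E : Fin m → Fin r → Matrix (Fin d) (Fin d) ℂ)
    (M1 : Matrix (Fin d) (Fin d) ℂ)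
    (ρ : Matrix (Fin d) (Fin d) ℂ) : Matrix (Fin d) (Fin d) ℂ :=
  ((m : ℂ)⁻¹) • ∑ i : Fin m, Tstep E M1 i ρ

/-- `H_{R̄_n(ρ)} = ⋁_{k=0}^n supp(T^k(ρ))`. -/
def HRbar (E : Fin m → Fin r → Matrix (Fin d) (Fin d) ℂ)
    (M1 : Matrix (Fin d) (Fin d) ℂ)
    (ρ : Matrix (Fin d) (Fin d) ℂ) (n : ℕ) : Submodule ℂ (Fin d → ℂ) :=
  ⨆ k : Fin (n + 1), supp ((Tavg E M1)^[k] ρ)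

/-- Reachable termination probability `h(ρ)`. -/
def hProb (E : Fin m → Fin r → Matrix (Fin d) (Fin d) ℂ)
    (M0 M1 : Matrix (Fin d) (Fin d) ℂ)
    (ρ : Matrix (Fin d) (Fin d) ℂ) : ℝ :=
  sInf { x : ℝ | ∃ σ : Matrix (Fin d) (Fin d) ℂ,
    σ.PosSemidef ∧ σ.trace = 1 ∧ supp σ ≤ HR E M1 ρ ∧ x = tInf E M0 M1 σ }

/-- `PD_f`: pure states diverging within the word `f`. -/
def PDword (E : Fin m → Fin r → Matrix (Fin d) (Fin d) ℂ)
    (M0 M1 : Matrix (Fin d) (Fin d) ℂ) (f : List (Fin m)) : Set (Fin d → ℂ) :=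
  { x : Fin d → ℂ | tWord E M0 M1 f (Matrix.vecMulVec x (star x)) = 0 }

/-- `PD_n`: union of `PD_f` over words of length `n`. -/
def PDn (E : Fin m → Fin r → Matrix (Fin d) (Fin d) ℂ)
    (M0 M1 : Matrix (Fin d) (Fin d) ℂ) (n : ℕ) : Set (Fin d → ℂ) :=
  { x : Fin d → ℂ | ∃ f : List (Fin m), f.length = n ∧ x ∈ PDword E M0 M1 f }

/-- `PD`: the diverging pure states. -/
def PD (E : Fin m → Fin r → Matrix (Fin d) (Fin d) ℂ)
    (M0 M1 : Matrix (Fin d) (Fin d) ℂ) : Set (Fin d → ℂ) :=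
  { x : Fin d → ℂ | ∃ s : ℕ → Fin m, tSched E M0 M1 s (Matrix.vecMulVec x (star x)) = 0 }


section Aux

variable (E : Fin m → Fin r → Matrix (Fin d) (Fin d) ℂ)
    (M0 M1 : Matrix (Fin d) (Fin d) ℂ)

lemma Tstep_add (i : Fin m) (ρ σ : Matrix (Fin d) (Fin d) ℂ) :
    Tstep E M1 i (ρ + σ) = Tstep E M1 i ρ + Tstep E M1 i σ := by
  simp [Tstep, mul_add, add_mul, Finset.sum_add_distrib]

lemma Tstep_smul (i : Fin m) (c : ℂ) (ρ : Matrix (Fin d) (Fin d) ℂ) :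
    Tstep E M1 i (c • ρ) = c • Tstep E M1 i ρ := by
  simp [Tstep, Finset.smul_sum, Matrix.mul_smul, Matrix.smul_mul]

lemma Tstep_posSemidef (i : Fin m) {ρ : Matrix (Fin d) (Fin d) ℂ} (hρ : ρ.PosSemidef) :
    (Tstep E M1 i ρ).PosSemidef := by
  unfold Tstep
  refine Finset.sum_induction _ (fun A : Matrix (Fin d) (Fin d) ℂ => A.PosSemidef)
    (fun a b ha hb => ha.add hb) Matrix.PosSemidef.zero (fun j _ => ?_)
  exact hρ.mul_mul_conjTranspose_same _

lemma Tword_nil (ρ : Matrix (Fin d) (Fin d) ℂ) : Tword E M1 [] ρ = ρ := rfl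

lemma Tword_cons (i : Fin m) (f : List (Fin m)) (ρ : Matrix (Fin d) (Fin d) ℂ) :
    Tword E M1 (i :: f) ρ = Tword E M1 f (Tstep E M1 i ρ) := rfl

lemma Tword_concat (f : List (Fin m)) (i : Fin m) (ρ : Matrix (Fin d) (Fin d) ℂ) :
    Tword E M1 (f ++ [i]) ρ = Tstep E M1 i (Tword E M1 f ρ) := by
  simp [Tword, List.foldl_append]

lemma Tword_add (f : List (Fin m)) :
    ∀ ρ σ : Matrix (Fin d) (Fin d) ℂ,
      Tword E M1 f (ρ + σ) = Tword E M1 f ρ + Tword E M1 f σ := by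
  induction f with
  | nil => intro ρ σ; rfl
  | cons i f ih =>
    intro ρ σ
    rw [Tword_cons, Tstep_add, ih, Tword_cons, Tword_cons]

lemma Tword_smul (f : List (Fin m)) :
    ∀ (c : ℂ) (ρ : Matrix (Fin d) (Fin d) ℂ),
      Tword E M1 f (c • ρ) = c • Tword E M1 f ρ := by
  induction f with
  | nil => intro c ρ; rfl
  | cons i f ih =>
    intro c ρ
    rw [Tword_cons, Tstep_smul, ih, Tword_cons]

lemma Tword_posSemidef (f : List (Fin m)) :
    ∀ {ρ : Matrix (Fin d) (Fin d) ℂ}, ρ.PosSemidef → (Tword E M1 f ρ).PosSemidef := by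
  induction f with
  | nil => intro ρ h; exact h
  | cons i f ih =>
    intro ρ h
    rw [Tword_cons]
    exact ih (Tstep_posSemidef E M1 i h)

lemma trace_re_nonneg {ρ : Matrix (Fin d) (Fin d) ℂ} (hρ : ρ.PosSemidef) :
    0 ≤ ρ.trace.re := by
  have hdiag : ∀ i, 0 ≤ (ρ i i).re := by
    intro i
    have h := hρ.dotProduct_mulVec_nonneg (Pi.single i 1)
    have hval : star (Pi.single i 1) ⬝ᵥ ρ *ᵥ Pi.single i 1 = ρ i i := by
      simp [Matrix.mulVec_single, dotProduct, Pi.single_apply, apply_ite (star : ℂ → ℂ)]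
    rw [hval] at h
    exact (Complex.le_def.mp h).1
  rw [Matrix.trace]
  rw [Complex.re_sum]
  exact Finset.sum_nonneg fun i _ => hdiag i

lemma mul_trace_re_nonneg {ρ : Matrix (Fin d) (Fin d) ℂ} (hρ : ρ.PosSemidef) :
    0 ≤ (M0 * ρ * M0ᴴ).trace.re :=
  trace_re_nonneg (hρ.mul_mul_conjTranspose_same M0)

lemma tWord_nil (ρ : Matrix (Fin d) (Fin d) ℂ) :
    tWord E M0 M1 [] ρ = (M0 * ρ * M0ᴴ).trace.re := by
  simp [tWord, Tword]

lemma tWord_cons (i : Fin m) (f : List (Fin m)) (ρ : Matrix (Fin d) (Fin d) ℂ) :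
    tWord E M0 M1 (i :: f) ρ
      = (M0 * ρ * M0ᴴ).trace.re + tWord E M0 M1 f (Tstep E M1 i ρ) := by
  unfold tWord
  rw [List.length_cons, Finset.sum_range_succ']
  have h2 : ∀ k ∈ Finset.range (f.length + 1),
      (M0 * Tword E M1 ((i :: f).take (k + 1)) ρ * M0ᴴ).trace.re
        = (M0 * Tword E M1 (f.take k) (Tstep E M1 i ρ) * M0ᴴ).trace.re := by
    intro k _
    rw [List.take_succ_cons, Tword_cons]
  rw [Finset.sum_congr rfl h2]
  simp [Tword_nil, add_comm]

lemma tWord_nonneg (f : List (Fin m)) :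
    ∀ {ρ : Matrix (Fin d) (Fin d) ℂ}, ρ.PosSemidef → 0 ≤ tWord E M0 M1 f ρ := by
  induction f with
  | nil =>
    intro ρ h
    rw [tWord_nil]
    exact mul_trace_re_nonneg M0 h
  | cons i f ih =>
    intro ρ h
    rw [tWord_cons]
    exact add_nonneg (mul_trace_re_nonneg M0 h) (ih (Tstep_posSemidef E M1 i h))

lemma tWord_add (f : List (Fin m)) (ρ σ : Matrix (Fin d) (Fin d) ℂ) :
    tWord E M0 M1 f (ρ + σ) = tWord E M0 M1 f ρ + tWord E M0 M1 f σ := by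
  unfold tWord
  rw [← Finset.sum_add_distrib]
  refine Finset.sum_congr rfl fun k _ => ?_
  rw [Tword_add, Matrix.mul_add, Matrix.add_mul, Matrix.trace_add, Complex.add_re]

lemma tWord_zero (f : List (Fin m)) : tWord E M0 M1 f 0 = 0 := by
  have h := tWord_add E M0 M1 f 0 0
  rw [add_zero] at h
  linarith

lemma tWord_sum (f : List (Fin m)) {ι : Type*} (s : Finset ι)
    (ρ : ι → Matrix (Fin d) (Fin d) ℂ) :
    tWord E M0 M1 f (∑ j ∈ s, ρ j) = ∑ j ∈ s, tWord E M0 M1 f (ρ j) := by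
  classical
  induction s using Finset.induction_on with
  | empty => simpa using tWord_zero E M0 M1 f
  | insert _ _ hj ih =>
    rw [Finset.sum_insert hj, Finset.sum_insert hj, tWord_add, ih]

lemma tWord_real_smul (f : List (Fin m)) (c : ℝ) (ρ : Matrix (Fin d) (Fin d) ℂ) :
    tWord E M0 M1 f ((c : ℂ) • ρ) = c * tWord E M0 M1 f ρ := by
  unfold tWord
  rw [Finset.mul_sum]
  refine Finset.sum_congr rfl fun k _ => ?_
  rw [Tword_smul, Matrix.mul_smul, Matrix.smul_mul, Matrix.trace_smul, smul_eq_mul,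
    Complex.re_ofReal_mul]

lemma tWord_concat (f : List (Fin m)) (i : Fin m) (ρ : Matrix (Fin d) (Fin d) ℂ) :
    tWord E M0 M1 (f ++ [i]) ρ
      = tWord E M0 M1 f ρ + (M0 * Tword E M1 (f ++ [i]) ρ * M0ᴴ).trace.re := by
  unfold tWord
  have hlen : (f ++ [i]).length = f.length + 1 := by simp
  rw [hlen, Finset.sum_range_succ]
  congr 1
  · refine Finset.sum_congr rfl fun k hk => ?_
    have hk' : k ≤ f.length := by
      have := Finset.mem_range.mp hk; omega
    rw [List.take_append, Nat.sub_eq_zero_of_le hk', List.take_zero,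
      List.append_nil]
  · rw [List.take_of_length_le (le_of_eq hlen)]

lemma Tstep_trace (hE : ∀ i, ∑ j, (E i j)ᴴ * E i j = 1) (i : Fin m)
    (ρ : Matrix (Fin d) (Fin d) ℂ) :
    (Tstep E M1 i ρ).trace = (M1ᴴ * M1 * ρ).trace := by
  unfold Tstep
  rw [Matrix.trace_sum]
  calc ∑ j, ((E i j * M1) * ρ * (E i j * M1)ᴴ).trace
      = ∑ j, ((E i j * M1)ᴴ * (E i j * M1) * ρ).trace := by
        refine Finset.sum_congr rfl fun j _ => ?_
        rw [Matrix.trace_mul_cycle]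
    _ = ((∑ j, (E i j * M1)ᴴ * (E i j * M1)) * ρ).trace := by
        rw [Finset.sum_mul, Matrix.trace_sum]
    _ = (M1ᴴ * M1 * ρ).trace := by
        congr 1
        have h : ∑ j, (E i j * M1)ᴴ * (E i j * M1)
            = M1ᴴ * (∑ j, (E i j)ᴴ * E i j) * M1 := by
          rw [Finset.mul_sum, Finset.sum_mul]
          refine Finset.sum_congr rfl fun j _ => ?_
          simp [Matrix.conjTranspose_mul, Matrix.mul_assoc]
        rw [h, hE i, Matrix.mul_one]

lemma step_trace (hE : ∀ i, ∑ j, (E i j)ᴴ * E i j = 1)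
    (hM : M0ᴴ * M0 + M1ᴴ * M1 = 1) (i : Fin m) (ρ : Matrix (Fin d) (Fin d) ℂ) :
    (M0 * ρ * M0ᴴ).trace + (Tstep E M1 i ρ).trace = ρ.trace := by
  rw [Tstep_trace E M1 hE, Matrix.trace_mul_cycle M0 ρ M0ᴴ, ← Matrix.trace_add,
    ← Matrix.add_mul, hM, Matrix.one_mul]

lemma prefixn_zero (s : ℕ → Fin m) : prefixn s 0 = [] := rfl

lemma prefixn_succ (s : ℕ → Fin m) (N : ℕ) :
    prefixn s (N + 1) = prefixn s N ++ [s N] := by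
  rw [prefixn, List.ofFn_succ', List.concat_eq_append]
  simp [prefixn]

lemma partial_trace (hE : ∀ i, ∑ j, (E i j)ᴴ * E i j = 1)
    (hM : M0ᴴ * M0 + M1ᴴ * M1 = 1) (s : ℕ → Fin m) (ρ : Matrix (Fin d) (Fin d) ℂ) :
    ∀ N : ℕ,
      ∑ k ∈ Finset.range N, (M0 * Tword E M1 (prefixn s k) ρ * M0ᴴ).trace
        + (Tword E M1 (prefixn s N) ρ).trace = ρ.trace := by
  intro N
  induction N with
  | zero => simp [prefixn_zero, Tword_nil]
  | succ N ih =>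
    rw [Finset.sum_range_succ, prefixn_succ, Tword_concat]
    have h2 := step_trace E M0 M1 hE hM (s N) (Tword E M1 (prefixn s N) ρ)
    linear_combination ih + h2

lemma sched_summable (hE : ∀ i, ∑ j, (E i j)ᴴ * E i j = 1)
    (hM : M0ᴴ * M0 + M1ᴴ * M1 = 1) (s : ℕ → Fin m)
    {ρ : Matrix (Fin d) (Fin d) ℂ} (hρ : ρ.PosSemidef) :
    Summable fun k : ℕ => (M0 * Tword E M1 (prefixn s k) ρ * M0ᴴ).trace.re := by
  apply summable_of_sum_range_le (c := ρ.trace.re)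
  · intro k
    exact mul_trace_re_nonneg M0 (Tword_posSemidef E M1 _ hρ)
  · intro N
    have h := congrArg Complex.re (partial_trace E M0 M1 hE hM s ρ N)
    rw [Complex.add_re, Complex.re_sum] at h
    have h2 : 0 ≤ (Tword E M1 (prefixn s N) ρ).trace.re :=
      trace_re_nonneg (Tword_posSemidef E M1 _ hρ)
    linarith

lemma tWord_prefixn (s : ℕ → Fin m) (ρ : Matrix (Fin d) (Fin d) ℂ) (N : ℕ) :
    tWord E M0 M1 (prefixn s N) ρ
      = ∑ k ∈ Finset.range (N + 1), (M0 * Tword E M1 (prefixn s k) ρ * M0ᴴ).trace.re := by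
  induction N with
  | zero => simp [prefixn_zero, tWord_nil, Tword_nil]
  | succ N ih =>
    rw [Finset.sum_range_succ, ← ih, prefixn_succ, tWord_concat, ← prefixn_succ]

lemma vecMulVec_star_posSemidef (x : Fin d → ℂ) :
    (Matrix.vecMulVec x (star x)).PosSemidef := by
  exact Matrix.posSemidef_vecMulVec_self_star x

lemma posSemidef_sum_vmv {σ : Matrix (Fin d) (Fin d) ℂ} (hσ : σ.PosSemidef) :
    ∃ v : Fin d → (Fin d → ℂ), σ = ∑ j, Matrix.vecMulVec (v j) (star (v j)) := by
  open MatrixOrder in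
  refine ⟨fun j i => CFC.sqrt σ i j, ?_⟩
  open MatrixOrder in
  have h2 : σ = CFC.sqrt σ * (CFC.sqrt σ)ᴴ := by
    rw [(CFC.sqrt_nonneg σ).posSemidef.1.eq, CFC.sqrt_mul_sqrt_self σ hσ.nonneg]
  conv_lhs => rw [h2]
  ext i k
  simp only [Matrix.mul_apply, Matrix.conjTranspose_apply,
    Matrix.sum_apply, Matrix.vecMulVec_apply, Pi.star_apply]

/-- `PDword` as a submodule. -/
def PDsub (f : List (Fin m)) : Submodule ℂ (Fin d → ℂ) where
  carrier := PDword E M0 M1 f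
  zero_mem' := by
    show tWord E M0 M1 f (Matrix.vecMulVec 0 (star (0 : Fin d → ℂ))) = 0
    have h : Matrix.vecMulVec (0 : Fin d → ℂ) (star (0 : Fin d → ℂ)) = 0 := by
      ext i j; simp [Matrix.vecMulVec_apply]
    rw [h, tWord_zero]
  add_mem' := by
    intro a b ha hb
    have ha' : tWord E M0 M1 f (Matrix.vecMulVec a (star a)) = 0 := ha
    have hb' : tWord E M0 M1 f (Matrix.vecMulVec b (star b)) = 0 := hb
    show tWord E M0 M1 f (Matrix.vecMulVec (a + b) (star (a + b))) = 0
    have hpar : Matrix.vecMulVec (a + b) (star (a + b))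
        + Matrix.vecMulVec (a - b) (star (a - b))
        = ((2 : ℝ) : ℂ) • Matrix.vecMulVec a (star a)
          + ((2 : ℝ) : ℂ) • Matrix.vecMulVec b (star b) := by
      ext i j
      simp only [Matrix.add_apply, Matrix.smul_apply, Matrix.vecMulVec_apply,
        Pi.star_apply, Pi.add_apply, Pi.sub_apply, star_add, star_sub, smul_eq_mul]
      push_cast
      ring
    have hsum := congrArg (tWord E M0 M1 f) hpar
    rw [tWord_add, tWord_add, tWord_real_smul, tWord_real_smul, ha', hb'] at hsum
    have h1 : 0 ≤ tWord E M0 M1 f (Matrix.vecMulVec (a + b) (star (a + b))) :=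
      tWord_nonneg E M0 M1 f (vecMulVec_star_posSemidef _)
    have h2 : 0 ≤ tWord E M0 M1 f (Matrix.vecMulVec (a - b) (star (a - b))) :=
      tWord_nonneg E M0 M1 f (vecMulVec_star_posSemidef _)
    linarith
  smul_mem' := by
    intro c x hx
    have hx' : tWord E M0 M1 f (Matrix.vecMulVec x (star x)) = 0 := hx
    show tWord E M0 M1 f (Matrix.vecMulVec (c • x) (star (c • x))) = 0
    have h : Matrix.vecMulVec (c • x) (star (c • x))
        = ((Complex.normSq c : ℝ) : ℂ) • Matrix.vecMulVec x (star x) := by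
      ext i j
      simp only [Matrix.smul_apply, Matrix.vecMulVec_apply, Pi.star_apply, Pi.smul_apply,
        smul_eq_mul, star_mul', RCLike.star_def]
      rw [← Complex.mul_conj]
      ring
    rw [h, tWord_real_smul, hx', mul_zero]

lemma mem_PDsub_iff (f : List (Fin m)) (x : Fin d → ℂ) :
    x ∈ PDsub E M0 M1 f ↔ x ∈ PDword E M0 M1 f := Iff.rfl

lemma tWord_zero_transfer {g h : List (Fin m)}
    (hgh : PDword E M0 M1 g ⊆ PDword E M0 M1 h)
    {σ : Matrix (Fin d) (Fin d) ℂ} (hσ : σ.PosSemidef)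
    (h0 : tWord E M0 M1 g σ = 0) : tWord E M0 M1 h σ = 0 := by
  obtain ⟨v, hv⟩ := posSemidef_sum_vmv hσ
  rw [hv, tWord_sum] at h0 ⊢
  have hz := (Finset.sum_eq_zero_iff_of_nonneg
    (fun j _ => tWord_nonneg E M0 M1 g (vecMulVec_star_posSemidef (v j)))).mp h0
  refine Finset.sum_eq_zero fun j hj => ?_
  exact hgh (hz j hj)

lemma submodule_le_of_subset_iUnion {ι : Type*} [Finite ι]
    {V : Submodule ℂ (Fin d → ℂ)} {W : ι → Submodule ℂ (Fin d → ℂ)}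
    (h : (V : Set (Fin d → ℂ)) ⊆ ⋃ i, (W i : Set (Fin d → ℂ))) : ∃ i, V ≤ W i := by
  have hcov : ⋃ i, (((W i).comap V.subtype : Submodule ℂ V) : Set V) = Set.univ := by
    rw [Set.eq_univ_iff_forall]
    intro v
    obtain ⟨i, hvi⟩ := Set.mem_iUnion.mp (h v.2)
    exact Set.mem_iUnion.mpr ⟨i, hvi⟩
  obtain ⟨i, hi⟩ := Subspace.exists_eq_top_of_iUnion_eq_univ hcov
  refine ⟨i, fun x hx => ?_⟩
  have hmem : (⟨x, hx⟩ : V) ∈ (W i).comap V.subtype := by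
    rw [hi]; exact Submodule.mem_top
  exact hmem

lemma PDn_eq_iUnion (L : ℕ) :
    PDn E M0 M1 L = ⋃ w : Fin L → Fin m, PDword E M0 M1 (List.ofFn w) := by
  ext x
  simp only [PDn, Set.mem_iUnion, Set.mem_setOf_eq]
  constructor
  · rintro ⟨f, hlen, hf⟩
    refine ⟨fun i => f.get (Fin.cast hlen.symm i), ?_⟩
    have hofn : List.ofFn (fun i : Fin L => f.get (Fin.cast hlen.symm i)) = f := by
      apply List.ext_get (by simp [hlen])
      intro i h1 h2
      simp [List.get_ofFn]
    rwa [hofn]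
  · rintro ⟨w, hw⟩
    exact ⟨List.ofFn w, by simp, hw⟩

lemma hinv_aux (a : Fin m) (t : List (Fin m)) (ρ : Matrix (Fin d) (Fin d) ℂ)
    (hρ : ρ.PosSemidef) (h0 : tWord E M0 M1 (a :: t) ρ = 0) :
    (M0 * ρ * M0ᴴ).trace.re = 0 ∧ tWord E M0 M1 t (Tstep E M1 a ρ) = 0 := by
  rw [tWord_cons] at h0
  have h1 : 0 ≤ (M0 * ρ * M0ᴴ).trace.re := mul_trace_re_nonneg M0 hρ
  have h2 : 0 ≤ tWord E M0 M1 t (Tstep E M1 a ρ) :=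
    tWord_nonneg E M0 M1 t (Tstep_posSemidef E M1 a hρ)
  constructor <;> linarith

end Aux

/-- if `PD_n = PD_{n+1}` then `PD = PD_n`. -/
theorem PD_eq_PDn_of_stable (d m r : ℕ) (hd : 0 < d) (hm : 0 < m)
    (E : Fin m → Fin r → Matrix (Fin d) (Fin d) ℂ)
    (hE : ∀ i, ∑ j, (E i j)ᴴ * E i j = 1)
    (M0 M1 : Matrix (Fin d) (Fin d) ℂ)
    (hM : M0ᴴ * M0 + M1ᴴ * M1 = 1)
    (n : ℕ) (hstab : PDn E M0 M1 n = PDn E M0 M1 (n + 1)) :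
    PD E M0 M1 = PDn E M0 M1 n := by
  haveI : Inhabited (Fin m) := ⟨⟨0, hm⟩⟩
  apply Set.Subset.antisymm
  · -- PD ⊆ PDn n
    rintro x ⟨s, hs⟩
    set X := Matrix.vecMulVec x (star x) with hX
    have hXpsd : X.PosSemidef := vecMulVec_star_posSemidef x
    have hsum : Summable fun k : ℕ => (M0 * Tword E M1 (prefixn s k) X * M0ᴴ).trace.re :=
      sched_summable E M0 M1 hE hM s hXpsd
    have hterm : ∀ k : ℕ, (M0 * Tword E M1 (prefixn s k) X * M0ᴴ).trace.re = 0 := by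
      intro k
      have hle : (M0 * Tword E M1 (prefixn s k) X * M0ᴴ).trace.re
          ≤ tSched E M0 M1 s X := by
        exact Summable.le_tsum hsum k fun j _ =>
          mul_trace_re_nonneg M0 (Tword_posSemidef E M1 _ hXpsd)
      have hge : 0 ≤ (M0 * Tword E M1 (prefixn s k) X * M0ᴴ).trace.re :=
        mul_trace_re_nonneg M0 (Tword_posSemidef E M1 _ hXpsd)
      rw [hs] at hle
      linarith
    refine ⟨prefixn s n, by simp [prefixn], ?_⟩
    show tWord E M0 M1 (prefixn s n) X = 0
    rw [tWord_prefixn]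
    exact Finset.sum_eq_zero fun k _ => hterm k
  · -- PDn n ⊆ PD
    intro x hx
    set X := Matrix.vecMulVec x (star x) with hX
    have hXpsd : X.PosSemidef := vecMulVec_star_posSemidef x
    have hnext : ∀ g : List (Fin m), g.length = n →
        ∃ h : List (Fin m), h.length = n + 1 ∧ PDword E M0 M1 g ⊆ PDword E M0 M1 h := by
      intro g hg
      have h1 : PDword E M0 M1 g ⊆ PDn E M0 M1 n := fun y hy => ⟨g, hg, hy⟩
      rw [hstab, PDn_eq_iUnion] at h1
      obtain ⟨w, hw⟩ := submodule_le_of_subset_iUnion (V := PDsub E M0 M1 g)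
        (W := fun w : Fin (n + 1) → Fin m => PDsub E M0 M1 (List.ofFn w)) h1
      exact ⟨List.ofFn w, by simp, hw⟩
    choose nextw hlen hsub using hnext
    obtain ⟨h0, h0len, h0mem⟩ : ∃ f : List (Fin m), f.length = n + 1 ∧ x ∈ PDword E M0 M1 f := by
      have hx' : x ∈ PDn E M0 M1 (n + 1) := hstab ▸ hx
      exact hx'
    let seq : ℕ → {l : List (Fin m) // l.length = n + 1} := fun k =>
      Nat.rec ⟨h0, h0len⟩
        (fun _ p => ⟨nextw p.1.tail (by rw [List.length_tail, p.2]; rfl),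
          hlen _ _⟩) k
    set s : ℕ → Fin m := fun k => (seq k).1.headI with hsdef
    have hseq_succ : ∀ k : ℕ, (seq (k + 1)).1
        = nextw (seq k).1.tail (by rw [List.length_tail, (seq k).2]; rfl) := fun k => rfl
    have hinv : ∀ k : ℕ, tWord E M0 M1 (seq k).1 (Tword E M1 (prefixn s k) X) = 0 := by
      intro k
      induction k with
      | zero => rw [prefixn_zero, Tword_nil]; exact h0mem
      | succ k ih =>
        obtain ⟨a, t, hat⟩ : ∃ a t, (seq k).1 = a :: t := by
          cases hsk : (seq k).1 with
          | nil => exfalso; have := (seq k).2; rw [hsk] at this; simp at this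
          | cons a t => exact ⟨a, t, rfl⟩
        have hsk : s k = a := by rw [hsdef]; simp [hat]
        have hsplit := hinv_aux E M0 M1 a t (Tword E M1 (prefixn s k) X)
          (Tword_posSemidef E M1 _ hXpsd) (by rw [← hat]; exact ih)
        have hρ1 : Tword E M1 (prefixn s (k + 1)) X
            = Tstep E M1 a (Tword E M1 (prefixn s k) X) := by
          rw [prefixn_succ, Tword_concat, hsk]
        have htail : tWord E M0 M1 t (Tword E M1 (prefixn s (k + 1)) X) = 0 := by
          rw [hρ1]; exact hsplit.2
        have hsubset : PDword E M0 M1 t ⊆ PDword E M0 M1 ((seq (k + 1)).1) := by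
          rw [hseq_succ k]
          have : (seq k).1.tail = t := by rw [hat]; rfl
          exact this ▸ hsub _ _
        exact tWord_zero_transfer E M0 M1 hsubset
          (Tword_posSemidef E M1 _ hXpsd) htail
    refine ⟨s, ?_⟩
    have hterm : ∀ k : ℕ, (M0 * Tword E M1 (prefixn s k) X * M0ᴴ).trace.re = 0 := by
      intro k
      obtain ⟨a, t, hat⟩ : ∃ a t, (seq k).1 = a :: t := by
        cases hsk : (seq k).1 with
        | nil => exfalso; have := (seq k).2; rw [hsk] at this; simp at this
        | cons a t => exact ⟨a, t, rfl⟩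
      have hsplit := hinv_aux E M0 M1 a t (Tword E M1 (prefixn s k) X)
        (Tword_posSemidef E M1 _ hXpsd) (by rw [← hat]; exact hinv k)
      exact hsplit.1
    unfold tSched
    rw [tsum_congr hterm]
    exact tsum_zero
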